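/- Let q be a prime power, s ≥ 2, and u | (q^s−1)/(q−1), with u, q^{s-1} coprime. Define ι : ℕ → ℕ × ℕ as the partial inverse of (i,j) ↦ i·q^{s-1}+j·u on {(i,j) : 0 ≤ j < q^{s-1}}. Suppose γ₁ < γ₂ < ⋯ < γ_w are elements of {i·q^{s-1}+j·u : 0 ≤ i, 0 ≤ j < q^{s-1}} with γ_w − γ₁ < min{u, q^{s-1}}. Writing ι(γ_k) = (a'_k, b'_k), the multiset {(a'_1,b'_1),…,(a'_w,b'_w)} can be enumerated as (a₁,b₁),…,(a_w,b_w) with a₁ < a₂ < ⋯ < a_w and b_w < b_{w-1} < ⋯ < b₁. -/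
import Mathlib


theorem norm_trace_window_enumeration
    (q s u w : ℕ) (hq : IsPrimePow q) (hs : 2 ≤ s)
    (hu : 0 < u) (hdiv : u ∣ (q ^ s - 1) / (q - 1))
    (hcop : Nat.Coprime u (q ^ (s - 1)))
    (γ : Fin w → ℕ) (hmono : StrictMono γ)
    (a' b' : Fin w → ℕ)
    (hrep : ∀ k, γ k = a' k * q ^ (s - 1) + b' k * u)
    (hb : ∀ k, b' k < q ^ (s - 1))
    (hwindow : ∀ i j : Fin w, γ i < γ j + min u (q ^ (s - 1))) :
    ∃ σ : Equiv.Perm (Fin w),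
      StrictMono (a' ∘ σ) ∧ StrictAnti (b' ∘ σ) := by
  set Q := q ^ (s - 1) with hQ
  -- if a' k < a' l then b' l < b' k
  have key : ∀ k l : Fin w, a' k < a' l → b' l < b' k := by
    intro k l hkl
    by_contra h
    push_neg at h
    have hle : γ k + min u Q ≤ γ l := by
      rw [hrep k, hrep l]
      have h1 : a' k * Q + Q ≤ a' l * Q := by
        have := Nat.succ_le_of_lt hkl
        nlinarith
      have h2 : b' k * u ≤ b' l * u := Nat.mul_le_mul_right u h
      have h3 : min u Q ≤ Q := min_le_right _ _
      omega
    exact absurd (hwindow l k) (not_lt.2 hle)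
  -- if a' k = a' l and b' k < b' l, contradiction
  have aux : ∀ k l : Fin w, a' k = a' l → b' k < b' l → False := by
    intro k l ha hbl
    have hle : γ k + min u Q ≤ γ l := by
      rw [hrep k, hrep l, ha]
      have h1 : b' k * u + u ≤ b' l * u := by
        have := Nat.succ_le_of_lt hbl
        nlinarith
      have h3 : min u Q ≤ u := min_le_left _ _
      omega
    exact absurd (hwindow l k) (not_lt.2 hle)
  have inj_a : Function.Injective a' := by
    intro k l h
    by_contra hne
    have hγ : γ k ≠ γ l := fun e => hne (hmono.injective e)
    have hb' : b' k ≠ b' l := by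
      intro e; exact hγ (by rw [hrep k, hrep l, h, e])
    rcases lt_or_gt_of_ne hb' with hlt | hlt
    · exact aux k l h hlt
    · exact aux l k h.symm hlt
  refine ⟨Tuple.sort a', ?_, ?_⟩
  · exact (Tuple.monotone_sort a').strictMono_of_injective
      (inj_a.comp (Tuple.sort a').injective)
  · intro i j hij
    exact key _ _ (((Tuple.monotone_sort a').strictMono_of_injective
      (inj_a.comp (Tuple.sort a').injective)) hij)
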